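/- In the 3-stack word of any permutation (the word over {A,B,C,D} recording the greedy 3-stack sorting algorithm's moves), there is no factor DA, no factor DB, and no factor CA. -/

import Mathlib

set_option linter.unusedVariables false

inductive Move | A | B | C | D
deriving DecidableEq, Repr

structure Config where
  input : List ℕ
  s1 : List ℕ
  s2 : List ℕ
  s3 : List ℕ
  out : List ℕ

def canA (c : Config) : Bool :=
  match c.input, c.s1 with
  | x :: _, [] => true
  | x :: _, t :: _ => decide (x < t)
  | [], _ => false

def canB (c : Config) : Bool :=
  match c.s1, c.s2 with
  | x :: _, [] => true
  | x :: _, t :: _ => decide (x < t)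
  | [], _ => false

def canC (c : Config) : Bool :=
  match c.s2, c.s3 with
  | x :: _, [] => true
  | x :: _, t :: _ => decide (x < t)
  | [], _ => false

def canD (c : Config) : Bool := !c.s3.isEmpty

def doA (c : Config) : Config :=
  { c with input := c.input.tail, s1 := c.input.headD 0 :: c.s1 }
def doB (c : Config) : Config :=
  { c with s1 := c.s1.tail, s2 := c.s1.headD 0 :: c.s2 }
def doC (c : Config) : Config :=
  { c with s2 := c.s2.tail, s3 := c.s2.headD 0 :: c.s3 }
def doD (c : Config) : Config :=
  { c with s3 := c.s3.tail, out := c.out ++ [c.s3.headD 0] }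

/-- One step of the greedy (priority `A > B > C > D`) 3-stack sorting algorithm:
`A` = input→S₁, `B` = S₁→S₂, `C` = S₂→S₃, `D` = S₃→output. -/
def step (c : Config) : Option (Move × Config) :=
  if canA c then some (.A, doA c)
  else if canB c then some (.B, doB c)
  else if canC c then some (.C, doC c)
  else if canD c then some (.D, doD c)
  else none

def runWord : ℕ → Config → List Move
  | 0, _ => []
  | fuel + 1, c =>
    match step c with
    | none => []
    | some (m, c') => m :: runWord fuel c'

def run : ℕ → Config → Config
  | 0, c => c
  | fuel + 1, c =>
    match step c with
    | none => c
    | some (_, c') => run fuel c'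

def initConfig (p : List ℕ) : Config := ⟨p, [], [], [], []⟩

/-- The 3-stack word of `p`: the sequence of moves of the greedy algorithm on `p`. -/
def stackWord (p : List ℕ) : List Move := runWord (4 * p.length) (initConfig p)

/-- The output of the greedy 3-stack sorting algorithm on `p`. -/
def output3 (p : List ℕ) : List ℕ := (run (4 * p.length) (initConfig p)).out


def NotBad (a b : Move) : Prop :=
  ¬((a = .D ∧ b = .A) ∨ (a = .D ∧ b = .B) ∨ (a = .C ∧ b = .A))

lemma canA_doC (c : Config) : canA (doC c) = canA c := rfl
lemma canA_doD (c : Config) : canA (doD c) = canA c := rfl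
lemma canB_doD (c : Config) : canB (doD c) = canB c := rfl

lemma step_pair {c c' c'' : Config} {m m' : Move}
    (h : step c = some (m, c')) (h' : step c' = some (m', c'')) :
    NotBad m m' := by
  unfold step at h
  by_cases hA : canA c
  · simp [hA] at h
    obtain ⟨hm, _⟩ := h
    subst hm
    rintro (⟨h1, _⟩ | ⟨h1, _⟩ | ⟨h1, _⟩) <;> simp at h1
  by_cases hB : canB c
  · simp [hA, hB] at h
    obtain ⟨hm, _⟩ := h
    subst hm
    rintro (⟨h1, _⟩ | ⟨h1, _⟩ | ⟨h1, _⟩) <;> simp at h1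
  by_cases hC : canC c
  · simp [hA, hB, hC] at h
    obtain ⟨hm, hc⟩ := h
    subst hm
    -- c' = doC c, canA c' = false
    have hA' : canA c' = false := by
      rw [← hc, canA_doC]; simpa using hA
    unfold step at h'
    rw [hA'] at h'
    simp only [Bool.false_eq_true, if_false] at h'
    split_ifs at h' <;> simp_all <;>
      (rintro (⟨h1, h2⟩ | ⟨h1, h2⟩ | ⟨h1, h2⟩) <;> simp_all)
  by_cases hD : canD c
  · simp [hA, hB, hC, hD] at h
    obtain ⟨hm, hc⟩ := h
    subst hm
    have hA' : canA c' = false := by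
      rw [← hc, canA_doD]; simpa using hA
    have hB' : canB c' = false := by
      rw [← hc, canB_doD]; simpa using hB
    unfold step at h'
    rw [hA', hB'] at h'
    simp only [Bool.false_eq_true, if_false] at h'
    split_ifs at h' <;> simp_all <;>
      (rintro (⟨h1, h2⟩ | ⟨h1, h2⟩ | ⟨h1, h2⟩) <;> simp_all)
  · simp [hA, hB, hC, hD] at h

lemma chain_runWord (fuel : ℕ) (c : Config) :
    List.Chain' NotBad (runWord fuel c) := by
  induction fuel generalizing c with
  | zero => simp [runWord]; exact List.isChain_nil
  | succ fuel ih =>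
    rw [runWord]
    cases h : step c with
    | none => simp; exact List.isChain_nil
    | some mc =>
      obtain ⟨m, c'⟩ := mc
      refine List.isChain_cons.mpr ?_
      refine ⟨?_, ih c'⟩
      intro y hy
      cases fuel with
      | zero => simp [runWord] at hy
      | succ fuel' =>
        rw [runWord] at hy
        cases h' : step c' with
        | none => rw [h'] at hy; simp at hy
        | some mc' =>
          obtain ⟨m', c''⟩ := mc'
          rw [h'] at hy
          simp at hy
          subst hy
          exact step_pair h h'

lemma no_factor {p : List ℕ} {a b : Move}
    (hab : (a = .D ∧ b = .A) ∨ (a = .D ∧ b = .B) ∨ (a = .C ∧ b = .A)) :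
    ¬ ([a, b] <:+: stackWord p) := by
  intro hinf
  have := (chain_runWord (4 * p.length) (initConfig p)).infix hinf
  rw [List.isChain_pair] at this
  exact this hab

/-- In the 3-stack word of any permutation, a `D` move is never immediately
followed by an `A` or a `B` move, and a `C` move is never immediately
followed by an `A` move: there are no factors `DA`, `DB`, `CA`. -/
theorem stmt_17 (n : ℕ) (p : List ℕ) (hp : p.Perm (List.range' 1 n)) :
    ¬ ([Move.D, Move.A] <:+: stackWord p) ∧
    ¬ ([Move.D, Move.B] <:+: stackWord p) ∧
    ¬ ([Move.C, Move.A] <:+: stackWord p) := by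
  exact ⟨no_factor (Or.inl ⟨rfl, rfl⟩), no_factor (Or.inr (Or.inl ⟨rfl, rfl⟩)),
    no_factor (Or.inr (Or.inr ⟨rfl, rfl⟩))⟩
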